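/- arXiv:2509.04749 — 5 statements merged into one kernel-verified Lean document; each statement's English description precedes it below -/
import Mathlib

section
/- Let β > 0, c ∈ (0,1) and α ∈ [0,1). Then there exists a unique pair (x*, θ*) ∈ ℝ × ℝ satisfying simultaneously the citizen indifference condition Φ(√β·(θ* − x*)) = c and the regime indifference condition θ* = α + (1 − α)·Φ(√β·(x* − θ*)). -/
open Real Set MeasureTheory

/-- The standard normal density `φ(t) = exp(−t²/2)/√(2π)`. -/
noncomputable def stdNormalPDF (t : ℝ) : ℝ :=
  Real.exp (-(t ^ 2) / 2) / Real.sqrt (2 * Real.pi)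

/-- The standard normal cumulative distribution function `Φ`. -/
noncomputable def stdNormalCDF (x : ℝ) : ℝ :=
  ∫ t in Set.Iic x, stdNormalPDF t

lemma stdNormalPDF_eq : stdNormalPDF = ProbabilityTheory.gaussianPDFReal 0 1 := by
  funext t
  simp only [stdNormalPDF, ProbabilityTheory.gaussianPDFReal, NNReal.coe_one, mul_one, sub_zero]
  rw [div_eq_inv_mul]

lemma integrable_stdNormalPDF : Integrable stdNormalPDF := by
  rw [stdNormalPDF_eq]; exact ProbabilityTheory.integrable_gaussianPDFReal 0 1

lemma integral_stdNormalPDF : ∫ t, stdNormalPDF t = 1 := by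
  rw [stdNormalPDF_eq]; exact ProbabilityTheory.integral_gaussianPDFReal_eq_one 0 one_ne_zero

lemma stdNormalPDF_pos (t : ℝ) : 0 < stdNormalPDF t := by
  rw [stdNormalPDF_eq]; exact ProbabilityTheory.gaussianPDFReal_pos 0 1 t one_ne_zero

lemma stdNormalCDF_sub (a b : ℝ) :
    stdNormalCDF b - stdNormalCDF a = ∫ t in a..b, stdNormalPDF t :=
  intervalIntegral.integral_Iic_sub_Iic integrable_stdNormalPDF.integrableOn
    integrable_stdNormalPDF.integrableOn

lemma stdNormalCDF_strictMono : StrictMono stdNormalCDF := by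
  intro a b hab
  have h := stdNormalCDF_sub a b
  have hpos : 0 < ∫ t in a..b, stdNormalPDF t :=
    intervalIntegral.intervalIntegral_pos_of_pos
      (integrable_stdNormalPDF.intervalIntegrable) (fun x => stdNormalPDF_pos x) hab
  linarith

lemma continuous_stdNormalCDF : Continuous stdNormalCDF := by
  have hC : ∀ t : ℝ, ‖stdNormalPDF t‖ ≤ (Real.sqrt (2 * Real.pi))⁻¹ := by
    intro t
    rw [Real.norm_of_nonneg (stdNormalPDF_pos t).le, stdNormalPDF, div_eq_inv_mul]
    have h1 : Real.exp (-(t ^ 2) / 2) ≤ 1 := by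
      rw [Real.exp_le_one_iff]; nlinarith [sq_nonneg t]
    have h2 : (0:ℝ) ≤ (Real.sqrt (2 * Real.pi))⁻¹ := by positivity
    nlinarith [Real.exp_pos (-(t ^ 2) / 2)]
  have : LipschitzWith (Real.toNNReal (Real.sqrt (2 * Real.pi))⁻¹) stdNormalCDF := by
    apply LipschitzWith.of_dist_le_mul
    intro x y
    rw [Real.dist_eq, Real.dist_eq]
    have := stdNormalCDF_sub y x
    have hb := intervalIntegral.norm_integral_le_of_norm_le_const
      (C := (Real.sqrt (2 * Real.pi))⁻¹) (f := stdNormalPDF) (a := y) (b := x)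
      (fun t _ => hC t)
    rw [Real.norm_eq_abs] at hb
    calc |stdNormalCDF x - stdNormalCDF y| = |∫ t in y..x, stdNormalPDF t| := by rw [this]
      _ ≤ (Real.sqrt (2 * Real.pi))⁻¹ * |x - y| := hb
      _ = (Real.toNNReal (Real.sqrt (2 * Real.pi))⁻¹ : ℝ) * |x - y| := by
          rw [Real.coe_toNNReal _ (by positivity)]
  exact this.continuous

lemma tendsto_stdNormalCDF_atTop :
    Filter.Tendsto stdNormalCDF Filter.atTop (nhds 1) := by
  have key : Filter.Tendsto (fun x => stdNormalCDF 0 + ∫ t in (0:ℝ)..x, stdNormalPDF t)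
      Filter.atTop (nhds (stdNormalCDF 0 + ∫ t in Set.Ioi (0:ℝ), stdNormalPDF t)) :=
    Filter.Tendsto.const_add _
      (intervalIntegral_tendsto_integral_Ioi 0 integrable_stdNormalPDF.integrableOn
        Filter.tendsto_id)
  have heq : (fun x => stdNormalCDF 0 + ∫ t in (0:ℝ)..x, stdNormalPDF t) = stdNormalCDF := by
    funext x
    have := stdNormalCDF_sub 0 x
    linarith
  have hval : stdNormalCDF 0 + ∫ t in Set.Ioi (0:ℝ), stdNormalPDF t = 1 := by
    rw [stdNormalCDF, intervalIntegral.integral_Iic_add_Ioi integrable_stdNormalPDF.integrableOn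
      integrable_stdNormalPDF.integrableOn, integral_stdNormalPDF]
  rw [heq, hval] at key
  exact key

lemma tendsto_stdNormalCDF_atBot :
    Filter.Tendsto stdNormalCDF Filter.atBot (nhds 0) := by
  have key : Filter.Tendsto (fun x => stdNormalCDF 0 - ∫ t in x..(0:ℝ), stdNormalPDF t)
      Filter.atBot (nhds (stdNormalCDF 0 - ∫ t in Set.Iic (0:ℝ), stdNormalPDF t)) :=
    Filter.Tendsto.const_sub _
      (intervalIntegral_tendsto_integral_Iic 0 integrable_stdNormalPDF.integrableOn
        Filter.tendsto_id)
  have heq : (fun x => stdNormalCDF 0 - ∫ t in x..(0:ℝ), stdNormalPDF t) = stdNormalCDF := by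
    funext x
    have := stdNormalCDF_sub x 0
    linarith
  have hval : stdNormalCDF 0 - ∫ t in Set.Iic (0:ℝ), stdNormalPDF t = 0 := by
    rw [stdNormalCDF]; ring
  rw [heq, hval] at key
  exact key

lemma stdNormalCDF_surj {c : ℝ} (hc : c ∈ Set.Ioo (0:ℝ) 1) : ∃ t, stdNormalCDF t = c := by
  obtain ⟨a, ha⟩ := (tendsto_stdNormalCDF_atBot.eventually_lt_const hc.1).exists
  obtain ⟨b, hb⟩ := (tendsto_stdNormalCDF_atTop.eventually_const_lt hc.2).exists
  have hab : a ≤ b := by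
    by_contra h
    exact absurd (stdNormalCDF_strictMono (lt_of_not_ge h)) (by linarith)
  obtain ⟨t, _, ht⟩ := intermediate_value_Icc hab continuous_stdNormalCDF.continuousOn
    (Set.mem_Icc.2 ⟨ha.le, hb.le⟩)
  exact ⟨t, ht⟩

/-- For `β > 0`, `c ∈ (0,1)`, `α ∈ [0,1)`, there is a unique pair
`(x*, θ*)` satisfying the citizen indifference condition `Φ(√β(θ* − x*)) = c` and the
regime indifference condition `θ* = α + (1 − α)Φ(√β(x* − θ*))`. -/
theorem benchmark_equilibrium_exists_unique
    (β c α : ℝ) (hβ : 0 < β) (hc : c ∈ Set.Ioo (0 : ℝ) 1) (hα : α ∈ Set.Ico (0 : ℝ) 1) :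
    ∃! p : ℝ × ℝ,
      stdNormalCDF (Real.sqrt β * (p.2 - p.1)) = c ∧
      p.2 = α + (1 - α) * stdNormalCDF (Real.sqrt β * (p.1 - p.2)) := by
  obtain ⟨t₀, ht₀⟩ := stdNormalCDF_surj hc
  have hsβ : 0 < Real.sqrt β := Real.sqrt_pos.2 hβ
  set θ : ℝ := α + (1 - α) * stdNormalCDF (-t₀) with hθ
  refine ⟨(θ - t₀ / Real.sqrt β, θ), ⟨?_, ?_⟩, ?_⟩
  · have : Real.sqrt β * (θ - (θ - t₀ / Real.sqrt β)) = t₀ := by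
      field_simp
      ring
    rw [this]; exact ht₀
  · have : Real.sqrt β * ((θ - t₀ / Real.sqrt β) - θ) = -t₀ := by
      field_simp
      ring
    simp only [this]
    exact hθ
  · rintro ⟨x, y⟩ ⟨h1, h2⟩
    simp only at h1 h2
    have hkey : Real.sqrt β * (y - x) = t₀ :=
      stdNormalCDF_strictMono.injective (by rw [h1, ht₀])
    have hneg : Real.sqrt β * (x - y) = -t₀ := by linarith [hkey]; 
    have hy : y = θ := by rw [h2, hneg]
    have hx : x = θ - t₀ / Real.sqrt β := by
      have : y - x = t₀ / Real.sqrt β := by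
        field_simp at hkey ⊢
        linarith
      rw [← hy]; linarith
    simp [hx, hy]
end

section
/- Let β > 0 and c ∈ (0,1), and for each α ∈ [0,1) let (x*(α), θ*(α)) be the unique pair satisfying Φ(√β·(θ*(α) − x*(α))) = c and θ*(α) = α + (1 − α)·Φ(√β·(x*(α) − θ*(α))). Then both α ↦ x*(α) and α ↦ θ*(α) are strictly increasing on [0,1): an increase in the mass of partisans raises both the citizens' attack threshold and the regime's collapse threshold. -/
open Real Set MeasureTheory

lemma stdNormalPDF_eq_s3 (t : ℝ) :
    stdNormalPDF t = Real.exp (-(1/2) * t ^ 2) / Real.sqrt (2 * Real.pi) := by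
  unfold stdNormalPDF
  ring_nf

lemma stdNormalPDF_integrable : MeasureTheory.Integrable stdNormalPDF := by
  have h : MeasureTheory.Integrable (fun t : ℝ => Real.exp (-(1/2) * t ^ 2)) :=
    integrable_exp_neg_mul_sq (by norm_num)
  have := h.div_const (Real.sqrt (2 * Real.pi))
  refine this.congr ?_
  filter_upwards with t
  rw [stdNormalPDF_eq_s3]

lemma stdNormalCDF_lt_one (x : ℝ) : stdNormalCDF x < 1 := by
  have hint := stdNormalPDF_integrable
  have htot : ∫ t, stdNormalPDF t = 1 := by
    have hg := integral_gaussian (1/2 : ℝ)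
    have h2 : Real.pi / (1/2 : ℝ) = 2 * Real.pi := by ring
    rw [h2] at hg
    have : ∫ t, stdNormalPDF t = (∫ t : ℝ, Real.exp (-(1/2) * t ^ 2)) / Real.sqrt (2 * Real.pi) := by
      rw [← MeasureTheory.integral_div]
      exact integral_congr_ae (Filter.Eventually.of_forall fun t => stdNormalPDF_eq_s3 t)
    rw [this, hg, div_self (by positivity)]
  have hsplit := intervalIntegral.integral_Iic_add_Ioi (μ := volume) (f := stdNormalPDF) (b := x)
    hint.integrableOn hint.integrableOn
  have hIoi : 0 < ∫ t in Set.Ioi x, stdNormalPDF t := by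
    rw [MeasureTheory.setIntegral_pos_iff_support_of_nonneg_ae
      (Filter.Eventually.of_forall fun t => (stdNormalPDF_pos t).le) hint.integrableOn]
    have hsupp : Function.support stdNormalPDF = Set.univ := by
      ext t; simp [Function.mem_support, (stdNormalPDF_pos t).ne']
    rw [hsupp, Set.univ_inter]
    simp [Real.volume_Ioi]
  have : stdNormalCDF x + ∫ t in Set.Ioi x, stdNormalPDF t = 1 := by
    unfold stdNormalCDF; rw [hsplit, htot]
  linarith

/-- If `(x*(α), θ*(α))` is the (unique) equilibrium pair for each
`α ∈ [0,1)`, then both `α ↦ x*(α)` and `α ↦ θ*(α)` are strictly increasing on `[0,1)`. -/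
theorem equilibrium_thresholds_strictMono_in_partisans
    (β c : ℝ) (hβ : 0 < β) (hc : c ∈ Set.Ioo (0 : ℝ) 1)
    (xs ts : ℝ → ℝ)
    (hcit : ∀ α ∈ Set.Ico (0 : ℝ) 1, stdNormalCDF (Real.sqrt β * (ts α - xs α)) = c)
    (hreg : ∀ α ∈ Set.Ico (0 : ℝ) 1,
      ts α = α + (1 - α) * stdNormalCDF (Real.sqrt β * (xs α - ts α))) :
    StrictMonoOn xs (Set.Ico (0 : ℝ) 1) ∧ StrictMonoOn ts (Set.Ico (0 : ℝ) 1) := by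
  have hβ' : 0 < Real.sqrt β := Real.sqrt_pos.mpr hβ
  have hconst : ∀ α ∈ Set.Ico (0 : ℝ) 1, ∀ α' ∈ Set.Ico (0 : ℝ) 1,
      ts α - xs α = ts α' - xs α' := by
    intro α hα α' hα'
    have h1 : stdNormalCDF (Real.sqrt β * (ts α - xs α))
        = stdNormalCDF (Real.sqrt β * (ts α' - xs α')) := by
      rw [hcit α hα, hcit α' hα']
    have h2 := stdNormalCDF_strictMono.injective h1
    exact mul_left_cancel₀ hβ'.ne' h2
  have h0 : (0 : ℝ) ∈ Set.Ico (0 : ℝ) 1 := by norm_num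
  set d := stdNormalCDF (Real.sqrt β * (xs 0 - ts 0)) with hd
  have hdlt : d < 1 := stdNormalCDF_lt_one _
  have hts : ∀ α ∈ Set.Ico (0 : ℝ) 1, ts α = α + (1 - α) * d := by
    intro α hα
    have hc1 := hconst α hα 0 h0
    have h1 : Real.sqrt β * (xs α - ts α) = Real.sqrt β * (xs 0 - ts 0) := by
      have : xs α - ts α = xs 0 - ts 0 := by linarith
      rw [this]
    rw [hreg α hα, h1]
  have htsmono : StrictMonoOn ts (Set.Ico (0 : ℝ) 1) := by
    intro a ha b hb hab
    rw [hts a ha, hts b hb]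
    nlinarith
  refine ⟨?_, htsmono⟩
  intro a ha b hb hab
  have h1 := hconst a ha b hb
  have h2 := htsmono ha hb hab
  linarith
end

section
/- Let β > 0 and r > 0, and define α* = 1 + 2r − √(1 + 4r²), θ* = 1 + r − (1/2)·√(1 + 4r²), x* = θ*, and y* = z* = r·√(2β/π)·(√(1 + 4r²) − 2r). Then: (i) α* ∈ (0,1); (ii) θ* = α* + (1 − α*)·(1/2), i.e. the regime indifference condition holds with c = 1/2; (iii) Φ(√β·(θ* − x*)) = 1/2, the citizen indifference condition with c = 1/2; (iv) x* = θ* + y* − z*; (v) y* = √β·φ(0)·α*·(1 − α*/2), the regime's first-order condition; (vi) z* = 2r·√β·(1 − α*)·φ(0), the opposition's first-order condition; where φ(0) = 1/√(2π). -/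
open Real Set MeasureTheory

lemma gauss_eq : (fun t : ℝ => Real.exp (-(t ^ 2) / 2)) = fun t => Real.exp (-(1/2 : ℝ) * t ^ 2) := by
  funext t; ring_nf

lemma cdf_zero : stdNormalCDF 0 = 1 / 2 := by
  have hint : Integrable (fun t : ℝ => Real.exp (-(t ^ 2) / 2)) := by
    rw [gauss_eq]; exact integrable_exp_neg_mul_sq (by norm_num)
  have htot : (∫ t : ℝ, Real.exp (-(t ^ 2) / 2)) = Real.sqrt (2 * Real.pi) := by
    rw [gauss_eq, integral_gaussian]
    rw [show Real.pi / (1/2) = 2 * Real.pi by ring]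
  have hsym : (∫ t in Iic (0:ℝ), Real.exp (-(t ^ 2) / 2))
      = ∫ t in Ioi (0:ℝ), Real.exp (-(t ^ 2) / 2) := by
    have := integral_comp_neg_Iic (0:ℝ) (fun t => Real.exp (-(t ^ 2) / 2))
    simpa [neg_sq] using this
  have hsplit : (∫ t in Iic (0:ℝ), Real.exp (-(t ^ 2) / 2))
      + (∫ t in Ioi (0:ℝ), Real.exp (-(t ^ 2) / 2)) = Real.sqrt (2 * Real.pi) := by
    rw [intervalIntegral.integral_Iic_add_Ioi hint.integrableOn hint.integrableOn, htot]
  have hhalf : (∫ t in Iic (0:ℝ), Real.exp (-(t ^ 2) / 2)) = Real.sqrt (2 * Real.pi) / 2 := by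
    linarith [hsym ▸ hsplit]
  have hpos : (0:ℝ) < Real.sqrt (2 * Real.pi) := Real.sqrt_pos.mpr (by positivity)
  unfold stdNormalCDF stdNormalPDF
  rw [integral_div, hhalf]
  field_simp

/-- For `β > 0`, `r > 0`, the closed forms
`α* = 1 + 2r − √(1+4r²)`, `θ* = 1 + r − ½√(1+4r²)`, `x* = θ*`,
`y* = z* = r√(2β/π)(√(1+4r²) − 2r)` satisfy: (i) `α* ∈ (0,1)`; (ii) regime indifference
`θ* = α* + (1 − α*)·½`; (iii) citizen indifference `Φ(√β(θ* − x*)) = ½`;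
(iv) `x* = θ* + y* − z*`; (v) regime FOC `y* = √β·φ(0)·α*(1 − α*/2)`;
(vi) opposition FOC `z* = 2r√β(1 − α*)φ(0)`. -/
theorem closed_form_equilibrium_c_half
    (β r α θ x y z : ℝ) (hβ : 0 < β) (hr : 0 < r)
    (hα : α = 1 + 2 * r - Real.sqrt (1 + 4 * r ^ 2))
    (hθ : θ = 1 + r - 1 / 2 * Real.sqrt (1 + 4 * r ^ 2))
    (hx : x = θ)
    (hy : y = r * Real.sqrt (2 * β / Real.pi) * (Real.sqrt (1 + 4 * r ^ 2) - 2 * r))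
    (hz : z = r * Real.sqrt (2 * β / Real.pi) * (Real.sqrt (1 + 4 * r ^ 2) - 2 * r)) :
    α ∈ Set.Ioo (0 : ℝ) 1 ∧
    θ = α + (1 - α) * (1 / 2) ∧
    stdNormalCDF (Real.sqrt β * (θ - x)) = 1 / 2 ∧
    x = θ + y - z ∧
    y = Real.sqrt β * stdNormalPDF 0 * α * (1 - α / 2) ∧
    z = 2 * r * Real.sqrt β * (1 - α) * stdNormalPDF 0 := by
  set s := Real.sqrt (1 + 4 * r ^ 2) with hs
  have hs2 : s ^ 2 = 1 + 4 * r ^ 2 := Real.sq_sqrt (by positivity)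
  have hlt : s < 1 + 2 * r := by
    rw [hs]
    rw [show (1:ℝ) + 2*r = Real.sqrt ((1+2*r)^2) from (Real.sqrt_sq (by positivity)).symm]
    exact Real.sqrt_lt_sqrt (by positivity) (by nlinarith)
  have hgt : 2 * r < s := by
    rw [hs]; exact (Real.lt_sqrt (by positivity)).mpr (by nlinarith)
  -- key sqrt identity
  have hBpos : (0:ℝ) < Real.sqrt (2 * Real.pi) := Real.sqrt_pos.mpr (by positivity)
  have hAB : Real.sqrt (2 * β / Real.pi) * Real.sqrt (2 * Real.pi) = 2 * Real.sqrt β := by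
    rw [← Real.sqrt_mul (by positivity)]
    rw [show 2 * β / Real.pi * (2 * Real.pi) = 4 * β by field_simp; ring]
    rw [Real.sqrt_mul (by norm_num), show Real.sqrt 4 = 2 by
      rw [show (4:ℝ) = 2^2 by norm_num, Real.sqrt_sq (by norm_num)]]
  have hpdf0 : stdNormalPDF 0 = 1 / Real.sqrt (2 * Real.pi) := by
    unfold stdNormalPDF; norm_num
  refine ⟨⟨by nlinarith, by nlinarith⟩, by rw [hθ, hα]; ring, ?_, by rw [hx, hy, hz]; ring, ?_, ?_⟩
  · rw [hx, sub_self, mul_zero]; exact cdf_zero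
  · have key : α * (1 - α/2) = 2*r*(s - 2*r) := by
      rw [hα]; linear_combination (-(1/2:ℝ)) * hs2
    rw [hpdf0]
    apply mul_right_cancel₀ hBpos.ne'
    have h1 : Real.sqrt β * (1 / Real.sqrt (2*Real.pi)) * α * (1 - α/2) * Real.sqrt (2*Real.pi)
        = Real.sqrt β * (α * (1 - α/2)) := by
      field_simp
    rw [h1, key, hy]
    linear_combination (r*(s-2*r)) * hAB
  · have key : (1 - α) = s - 2*r := by rw [hα]; ring
    rw [hpdf0, key]
    apply mul_right_cancel₀ hBpos.ne'
    have h1 : 2*r*Real.sqrt β * (s-2*r) * (1 / Real.sqrt (2*Real.pi)) * Real.sqrt (2*Real.pi)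
        = Real.sqrt β * (2*r*(s-2*r)) := by
      field_simp
    rw [h1, hz]
    linear_combination (r*(s-2*r)) * hAB
end

section
/- The function r ↦ r·(√(1 + 4r²) − 2r) is strictly increasing on (0, ∞). Consequently, for each fixed β > 0, the common equilibrium propaganda and counter-propaganda level y* = z* = r·√(2β/π)·(√(1 + 4r²) − 2r) is strictly increasing in the benefit-cost ratio r = B/ψ, and for each fixed r > 0 it is strictly increasing in the signal precision β. -/
open Real Set

private lemma sqrt_gt (r : ℝ) (hr : 0 < r) : 2 * r < Real.sqrt (1 + 4 * r ^ 2) := by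
  have h : (2 * r) ^ 2 < 1 + 4 * r ^ 2 := by nlinarith
  exact (Real.lt_sqrt (by positivity : (0:ℝ) ≤ 2 * r)).mpr h

private lemma key_eq (r : ℝ) (hr : 0 < r) :
    r * (Real.sqrt (1 + 4 * r ^ 2) - 2 * r)
      = r / (Real.sqrt (1 + 4 * r ^ 2) + 2 * r) := by
  have h1 : (0:ℝ) ≤ 1 + 4 * r ^ 2 := by positivity
  have hs : Real.sqrt (1 + 4 * r ^ 2) ^ 2 = 1 + 4 * r ^ 2 := Real.sq_sqrt h1
  have hpos : 0 < Real.sqrt (1 + 4 * r ^ 2) + 2 * r := by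
    have := sqrt_gt r hr; nlinarith
  field_simp
  have hs' : Real.sqrt (1 + r ^ 2 * 4) ^ 2 = 1 + r ^ 2 * 4 := by
    rw [show (1:ℝ) + r ^ 2 * 4 = 1 + 4 * r ^ 2 by ring]; exact hs
  nlinarith [hs']

private lemma mono1 : StrictMonoOn (fun r : ℝ => r * (Real.sqrt (1 + 4 * r ^ 2) - 2 * r))
    (Set.Ioi (0 : ℝ)) := by
  intro a ha b hb hab
  have ha : (0:ℝ) < a := ha
  have hb : (0:ℝ) < b := hb
  simp only
  rw [key_eq a ha, key_eq b hb]
  have hpa : 0 < Real.sqrt (1 + 4 * a ^ 2) + 2 * a := by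
    have := sqrt_gt a ha; nlinarith
  have hpb : 0 < Real.sqrt (1 + 4 * b ^ 2) + 2 * b := by
    have := sqrt_gt b hb; nlinarith
  rw [div_lt_div_iff₀ hpa hpb]
  have hkey : a * Real.sqrt (1 + 4 * b ^ 2) < b * Real.sqrt (1 + 4 * a ^ 2) := by
    have h1 : a * Real.sqrt (1 + 4 * b ^ 2) = Real.sqrt (a ^ 2 * (1 + 4 * b ^ 2)) := by
      rw [Real.sqrt_mul (by positivity), Real.sqrt_sq ha.le]
    have h2 : b * Real.sqrt (1 + 4 * a ^ 2) = Real.sqrt (b ^ 2 * (1 + 4 * a ^ 2)) := by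
      rw [Real.sqrt_mul (by positivity), Real.sqrt_sq hb.le]
    rw [h1, h2]
    apply Real.sqrt_lt_sqrt (by positivity)
    nlinarith
  nlinarith

/-- `r ↦ r(√(1 + 4r²) − 2r)` is strictly increasing on `(0, ∞)`;
hence the equilibrium communication level `y* = z* = r√(2β/π)(√(1+4r²) − 2r)` is
strictly increasing in `r` for each fixed `β > 0`, and strictly increasing in `β`
for each fixed `r > 0`. -/
theorem communication_level_monotonicity :
    StrictMonoOn (fun r : ℝ => r * (Real.sqrt (1 + 4 * r ^ 2) - 2 * r))
      (Set.Ioi (0 : ℝ)) ∧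
    (∀ β : ℝ, 0 < β →
      StrictMonoOn
        (fun r : ℝ =>
          r * Real.sqrt (2 * β / Real.pi) * (Real.sqrt (1 + 4 * r ^ 2) - 2 * r))
        (Set.Ioi (0 : ℝ))) ∧
    (∀ r : ℝ, 0 < r →
      StrictMonoOn
        (fun β : ℝ =>
          r * Real.sqrt (2 * β / Real.pi) * (Real.sqrt (1 + 4 * r ^ 2) - 2 * r))
        (Set.Ioi (0 : ℝ))) := by
  refine ⟨mono1, ?_, ?_⟩
  · intro β hβ a ha b hb hab
    have hc : 0 < Real.sqrt (2 * β / Real.pi) := by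
      apply Real.sqrt_pos.mpr; positivity
    have := mono1 ha hb hab
    simp only at this ⊢
    calc a * Real.sqrt (2 * β / Real.pi) * (Real.sqrt (1 + 4 * a ^ 2) - 2 * a)
        = Real.sqrt (2 * β / Real.pi) * (a * (Real.sqrt (1 + 4 * a ^ 2) - 2 * a)) := by ring
      _ < Real.sqrt (2 * β / Real.pi) * (b * (Real.sqrt (1 + 4 * b ^ 2) - 2 * b)) := by
          exact mul_lt_mul_of_pos_left this hc
      _ = b * Real.sqrt (2 * β / Real.pi) * (Real.sqrt (1 + 4 * b ^ 2) - 2 * b) := by ring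
  · intro r hr β1 hβ1 β2 hβ2 hβ
    have hβ1' : (0:ℝ) < β1 := hβ1
    have hβ2' : (0:ℝ) < β2 := hβ2
    have hC : 0 < Real.sqrt (1 + 4 * r ^ 2) - 2 * r := by
      have := sqrt_gt r hr; linarith
    have hs : Real.sqrt (2 * β1 / Real.pi) < Real.sqrt (2 * β2 / Real.pi) := by
      have hπ : (0:ℝ) < Real.pi := Real.pi_pos
      apply Real.sqrt_lt_sqrt (by positivity)
      gcongr
    simp only
    calc r * Real.sqrt (2 * β1 / Real.pi) * (Real.sqrt (1 + 4 * r ^ 2) - 2 * r)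
        < r * Real.sqrt (2 * β2 / Real.pi) * (Real.sqrt (1 + 4 * r ^ 2) - 2 * r) := by
          apply mul_lt_mul_of_pos_right _ hC
          exact mul_lt_mul_of_pos_left hs hr
      _ = _ := rfl
end

section
/- The functions r ↦ θ*(r) = 1 + r − (1/2)·√(1 + 4r²) and r ↦ α*(r) = 1 + 2r − √(1 + 4r²) are strictly increasing on (0, ∞), with θ*(r) ∈ (1/2, 1) and α*(r) ∈ (0,1) for all r > 0. Hence in the c = 1/2 equilibrium, both the regime's collapse threshold θ* and the citizens' threshold x* = θ* are strictly increasing in the benefit-cost ratio B/ψ. -/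
open Real Set

lemma sqrt_sq_aux (r : ℝ) : Real.sqrt (1 + 4 * r ^ 2) ^ 2 = 1 + 4 * r ^ 2 :=
  Real.sq_sqrt (by positivity)

lemma sqrt_lb (r : ℝ) (hr : 0 ≤ r) : 2 * r < Real.sqrt (1 + 4 * r ^ 2) := by
  rw [show (2:ℝ) * r = Real.sqrt ((2*r)^2) from (Real.sqrt_sq (by positivity)).symm]
  exact Real.sqrt_lt_sqrt (by positivity) (by nlinarith)

lemma sqrt_ub (r : ℝ) (hr : 0 < r) : Real.sqrt (1 + 4 * r ^ 2) < 1 + 2 * r := by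
  exact (Real.sqrt_lt' (by linarith)).mpr (by nlinarith)

/-- `θ*(r) = 1 + r − ½√(1 + 4r²)` and `α*(r) = 1 + 2r − √(1 + 4r²)`
are strictly increasing on `(0, ∞)`, with `θ*(r) ∈ (1/2, 1)` and `α*(r) ∈ (0,1)` for
all `r > 0`; hence in the `c = 1/2` equilibrium both the regime threshold `θ*` and the
citizen threshold `x* = θ*` strictly increase in the benefit-cost ratio. -/
theorem thresholds_monotone_in_benefit_cost_ratio :
    StrictMonoOn (fun r : ℝ => 1 + r - 1 / 2 * Real.sqrt (1 + 4 * r ^ 2))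
      (Set.Ioi (0 : ℝ)) ∧
    StrictMonoOn (fun r : ℝ => 1 + 2 * r - Real.sqrt (1 + 4 * r ^ 2))
      (Set.Ioi (0 : ℝ)) ∧
    (∀ r : ℝ, 0 < r →
      (1 + r - 1 / 2 * Real.sqrt (1 + 4 * r ^ 2)) ∈ Set.Ioo (1 / 2 : ℝ) 1) ∧
    (∀ r : ℝ, 0 < r →
      (1 + 2 * r - Real.sqrt (1 + 4 * r ^ 2)) ∈ Set.Ioo (0 : ℝ) 1) := by
  have key : ∀ a b : ℝ, 0 < a → a < b →
      Real.sqrt (1 + 4 * b ^ 2) - Real.sqrt (1 + 4 * a ^ 2) < 2 * (b - a) := by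
    intro a b ha hab
    have hsa := sqrt_sq_aux a
    have hsb := sqrt_sq_aux b
    have h2a := sqrt_lb a ha.le
    have h2b := sqrt_lb b (by linarith)
    nlinarith [mul_pos (sub_pos.2 hab) (by nlinarith : (0:ℝ) <
      Real.sqrt (1 + 4 * a ^ 2) + Real.sqrt (1 + 4 * b ^ 2))]
  refine ⟨?_, ?_, ?_, ?_⟩
  · intro a ha b hb hab
    have := key a b (by exact ha) hab
    simp only
    linarith
  · intro a ha b hb hab
    have := key a b (by exact ha) hab
    simp only
    linarith
  · intro r hr
    have h1 := sqrt_lb r hr.le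
    have h2 := sqrt_ub r hr
    exact ⟨by linarith, by linarith⟩
  · intro r hr
    have h1 := sqrt_lb r hr.le
    have h2 := sqrt_ub r hr
    exact ⟨by linarith, by linarith⟩
end
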